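/- There exists a constant C > 0 such that for all real numbers k ∈ (0, 1) and a ≥ 1, 2k(1 − k²)^{−3/2}·(artanh(√(1 − k²)/a) − √(1 − k²)/a) ≤ C. -/

import Mathlib

/-- The real inverse hyperbolic tangent, `artanh x = (1/2) · ln ((1+x)/(1−x))`. -/
noncomputable def artanh (x : ℝ) : ℝ := (1 / 2) * Real.log ((1 + x) / (1 - x))

lemma artanh_hasDerivAt {t : ℝ} (h1 : -1 < t) (h2 : t < 1) :
    HasDerivAt artanh (1 / (1 - t ^ 2)) t := by
  have hpos : (0:ℝ) < 1 - t := by linarith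
  have hpos' : (0:ℝ) < 1 + t := by linarith
  have h12 : (0:ℝ) < 1 - t ^ 2 := by nlinarith
  have hd : HasDerivAt (fun x : ℝ => (1 + x) / (1 - x)) (2 / (1 - t) ^ 2) t := by
    have ha : HasDerivAt (fun x : ℝ => 1 + x) 1 t := (hasDerivAt_id t).const_add 1
    have hb : HasDerivAt (fun x : ℝ => 1 - x) (-1) t := (hasDerivAt_id t).const_sub 1
    have := ha.div hb hpos.ne'
    exact this.congr_deriv (by ring)
  have hne : (1 + t) / (1 - t) ≠ 0 := by positivity
  have := (hd.log hne).const_mul (1/2 : ℝ)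
  have heq : (1/2 : ℝ) * (2 / (1 - t) ^ 2 / ((1 + t) / (1 - t))) = 1 / (1 - t ^ 2) := by
    field_simp
    ring
  rw [heq] at this
  exact this

lemma artanh_le_div {t : ℝ} (h0 : 0 ≤ t) (h1 : t < 1) : artanh t ≤ t / (1 - t ^ 2) := by
  set F : ℝ → ℝ := fun x => x / (1 - x ^ 2) - artanh x with hF
  have hDer : ∀ x ∈ Set.Ico (0:ℝ) 1,
      HasDerivAt F ((1 * (1 - x ^ 2) - x * (-(2 * x))) / (1 - x ^ 2) ^ 2 - 1 / (1 - x ^ 2)) x := by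
    intro x hx
    have hx0 : (0:ℝ) ≤ x := hx.1
    have hx1 : x < 1 := hx.2
    have hne : (1 - x ^ 2) ≠ 0 := by nlinarith
    have ha : HasDerivAt (fun y : ℝ => y / (1 - y ^ 2))
        ((1 * (1 - x ^ 2) - x * (-(2 * x))) / (1 - x ^ 2) ^ 2) x := by
      have hb : HasDerivAt (fun y : ℝ => 1 - y ^ 2) (-(2 * x)) x := by
        simpa using (hasDerivAt_pow 2 x).const_sub 1
      exact (hasDerivAt_id x).div hb hne
    exact ha.sub (artanh_hasDerivAt (by linarith) hx1)
  have hmono : MonotoneOn F (Set.Ico (0:ℝ) 1) := by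
    apply monotoneOn_of_deriv_nonneg (convex_Ico 0 1)
    · intro x hx
      exact ((hDer x hx).differentiableAt).continuousAt.continuousWithinAt
    · intro x hx
      rw [interior_Ico] at hx
      exact ((hDer x ⟨hx.1.le, hx.2⟩).differentiableAt).differentiableWithinAt
    · intro x hx
      rw [interior_Ico] at hx
      rw [(hDer x ⟨hx.1.le, hx.2⟩).deriv]
      have hx0 : (0:ℝ) < x := hx.1
      have hx1 : x < 1 := hx.2
      have hpos : (0:ℝ) < 1 - x ^ 2 := by nlinarith
      rw [div_sub_div _ _ (by positivity) hpos.ne']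
      apply div_nonneg _ (by positivity)
      nlinarith
  have h0mem : (0:ℝ) ∈ Set.Ico (0:ℝ) 1 := ⟨le_refl 0, by norm_num⟩
  have htmem : t ∈ Set.Ico (0:ℝ) 1 := ⟨h0, h1⟩
  have hle := hmono h0mem htmem h0
  have hF0 : F 0 = 0 := by
    simp only [hF]
    norm_num [artanh]
  rw [hF0] at hle
  have : 0 ≤ t / (1 - t ^ 2) - artanh t := hle
  linarith

/-- There is a constant `C > 0` such that for all `k ∈ (0, 1)` and `a ≥ 1`,
`2k(1 − k²)^(−3/2) · (artanh(√(1 − k²)/a) − √(1 − k²)/a) ≤ C`. -/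
theorem stmt_16 :
    ∃ C : ℝ, 0 < C ∧ ∀ k a : ℝ, 0 < k → k < 1 → 1 ≤ a →
      2 * k * (1 - k ^ 2) ^ (-(3 : ℝ) / 2) *
        (artanh (Real.sqrt (1 - k ^ 2) / a) - Real.sqrt (1 - k ^ 2) / a) ≤ C := by
  refine ⟨32, by norm_num, fun k a hk hk1 ha => ?_⟩
  have ha0 : (0:ℝ) < a := by linarith
  have h1k : (0:ℝ) < 1 - k ^ 2 := by nlinarith
  set u : ℝ := Real.sqrt (1 - k ^ 2) with hu
  clear_value u
  have hu0 : 0 < u := by rw [hu]; exact Real.sqrt_pos.mpr h1k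
  have huu : u ^ 2 = 1 - k ^ 2 := by rw [hu]; exact Real.sq_sqrt h1k.le
  have hu1 : u < 1 := by nlinarith [hu0]
  set t : ℝ := u / a with ht
  clear_value t
  have ht0 : 0 < t := by rw [ht]; exact div_pos hu0 ha0
  have htu : t ≤ u := by
    rw [ht, div_le_iff₀ ha0]
    nlinarith
  have ht1 : t < 1 := lt_of_le_of_lt htu hu1
  -- rewrite the rpow
  have h3 : u ^ 3 = (1 - k ^ 2) ^ ((3:ℝ)/2) := by
    rw [hu, Real.sqrt_eq_rpow, ← Real.rpow_natCast ((1 - k ^ 2) ^ ((1:ℝ)/2)) 3,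
      ← Real.rpow_mul h1k.le]
    norm_num
  have hr : (1 - k ^ 2) ^ (-(3 : ℝ) / 2) = (u ^ 3)⁻¹ := by
    rw [show (-(3 : ℝ) / 2) = -((3:ℝ)/2) by ring, Real.rpow_neg h1k.le, h3]
  rw [hr]
  set A : ℝ := artanh t - t with hA
  clear_value A
  clear hr h3 hu ht
  rcases le_or_gt A 0 with hAneg | hApos
  · have : 2 * k * (u ^ 3)⁻¹ * A ≤ 0 := by
      apply mul_nonpos_of_nonneg_of_nonpos _ hAneg
      positivity
    linarith
  rcases le_or_gt u (1/2) with hcase | hcase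
  · -- small u: cubic bound
    have hkey := artanh_le_div ht0.le ht1
    have hAt : A ≤ t ^ 3 / (1 - t ^ 2) := by
      rw [hA]
      have hden : (0:ℝ) < 1 - t ^ 2 := by nlinarith
      have : t / (1 - t ^ 2) - t = t ^ 3 / (1 - t ^ 2) := by
        field_simp
        ring
      linarith
    have h34 : (3:ℝ)/4 ≤ 1 - t ^ 2 := by nlinarith
    have hA2 : A ≤ (4/3) * t ^ 3 := by
      have h1 : t ^ 3 / (1 - t ^ 2) ≤ t ^ 3 / (3/4) :=
        div_le_div_of_nonneg_left (by positivity) (by norm_num) h34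
      calc A ≤ t ^ 3 / (1 - t ^ 2) := hAt
        _ ≤ t ^ 3 / (3/4) := h1
        _ = (4/3) * t ^ 3 := by ring
    have hA3 : A ≤ (4/3) * u ^ 3 := by
      have : t ^ 3 ≤ u ^ 3 := pow_le_pow_left₀ ht0.le htu 3
      nlinarith
    have hstep : 2 * k * (u ^ 3)⁻¹ * A ≤ 2 * k * (u ^ 3)⁻¹ * ((4/3) * u ^ 3) := by
      apply mul_le_mul_of_nonneg_left hA3
      positivity
    have heq : 2 * k * (u ^ 3)⁻¹ * ((4/3) * u ^ 3) = (8/3) * k := by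
      field_simp
      ring
    rw [heq] at hstep
    nlinarith
  · -- large u: log bound
    have hlog : A ≤ Real.log 2 - Real.log k := by
      have htu2 : t ^ 2 ≤ u ^ 2 := by nlinarith
      have hfrac : (1 + t) / (1 - t) ≤ 4 / k ^ 2 := by
        rw [div_le_div_iff₀ (by linarith) (by positivity)]
        nlinarith [sq_nonneg (1 - t)]
      have hlg : Real.log ((1 + t) / (1 - t)) ≤ Real.log (4 / k ^ 2) :=
        Real.log_le_log (div_pos (by linarith) (by linarith)) hfrac
      have h4 : Real.log (4 / k ^ 2) = 2 * Real.log 2 - 2 * Real.log k := by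
        rw [Real.log_div (by norm_num) (by positivity), show (4:ℝ) = 2 ^ 2 by norm_num,
          Real.log_pow, Real.log_pow]
        push_cast
        ring
      have : artanh t ≤ Real.log 2 - Real.log k := by
        rw [artanh]
        rw [h4] at hlg
        linarith
      rw [hA]
      linarith
    have hu8 : (u ^ 3)⁻¹ ≤ 8 := by
      rw [inv_le_comm₀ (by positivity) (by norm_num)]
      calc (8:ℝ)⁻¹ = (1/2) ^ 3 := by norm_num
        _ ≤ u ^ 3 := pow_le_pow_left₀ (by norm_num) hcase.le 3
    have hklog : k * (-Real.log k) ≤ 1 - k := by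
      have h2 := Real.log_le_sub_one_of_pos (inv_pos.mpr hk)
      rw [Real.log_inv] at h2
      have h3' : k * (k⁻¹ - 1) = 1 - k := by field_simp
      nlinarith
    have hl2 : Real.log 2 ≤ 1 := by
      have := Real.log_le_sub_one_of_pos (by norm_num : (0:ℝ) < 2)
      linarith
    have hl2' : 0 ≤ Real.log 2 := Real.log_nonneg (by norm_num)
    have step1 : 2 * k * (u ^ 3)⁻¹ * A ≤ 2 * k * (8 * A) := by
      have h := mul_le_mul_of_nonneg_left (mul_le_mul_of_nonneg_right hu8 hApos.le)
        (show (0:ℝ) ≤ 2 * k by positivity)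
      calc 2 * k * (u ^ 3)⁻¹ * A = 2 * k * ((u ^ 3)⁻¹ * A) := by ring
        _ ≤ 2 * k * (8 * A) := h
    have step2 : 2 * k * (8 * A) ≤ 16 * (k * (Real.log 2 - Real.log k)) := by
      have h := mul_le_mul_of_nonneg_left hlog (show (0:ℝ) ≤ k by positivity)
      calc 2 * k * (8 * A) = 16 * (k * A) := by ring
        _ ≤ 16 * (k * (Real.log 2 - Real.log k)) := by linarith
    have step3 : 16 * (k * (Real.log 2 - Real.log k)) ≤ 32 := by
      have h1 : k * Real.log 2 ≤ Real.log 2 := mul_le_of_le_one_left hl2' hk1.le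
      have expand : 16 * (k * (Real.log 2 - Real.log k))
          = 16 * (k * Real.log 2) + 16 * (k * (-Real.log k)) := by ring
      rw [expand]
      linarith
    linarith
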